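/- For the Bernoulli D-norm with parameter β ∈ (0,1], one has ‖(1,...,1)‖_{B_β} = (1 - (1-β)^d)/β, and as β → 0 the norm ‖x‖_{B_β} converges to ‖x‖_1 = Σ_i |x_i| for every x ∈ ℝ^d, while for β = 1, ‖x‖_{B_1} = max_i |x_i|. -/

import Mathlib

open Finset Filter

/-- The Bernoulli D-norm `‖x‖_{B_β} = Σ_{∅≠T⊆{1,…,d}} β^{|T|-1}(1-β)^{d-|T|} max_{i∈T}|x_i|`. -/
noncomputable def bernoulliDNorm (d : ℕ) (β : ℝ) (x : Fin d → ℝ) : ℝ :=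
  ∑ T ∈ (Finset.univ.powerset.filter (fun T : Finset (Fin d) => T ≠ ∅)).attach,
    β ^ (T.1.card - 1) * (1 - β) ^ (d - T.1.card) *
      T.1.sup' (Finset.nonempty_iff_ne_empty.mpr (Finset.mem_filter.mp T.2).2)
        (fun i => |x i|)

noncomputable def gAbs (d : ℕ) (x : Fin d → ℝ) (T : Finset (Fin d)) : ℝ :=
  if h : T.Nonempty then T.sup' h (fun i => |x i|) else 0

lemma bernoulliDNorm_eq_sum (d : ℕ) (β : ℝ) (x : Fin d → ℝ) :
    bernoulliDNorm d β x = ∑ T ∈ (Finset.univ.powerset.filter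
      (fun T : Finset (Fin d) => T ≠ ∅)),
      β ^ (T.card - 1) * (1 - β) ^ (d - T.card) * gAbs d x T := by
  unfold bernoulliDNorm
  rw [← Finset.sum_attach _ (fun T => β ^ (T.card - 1) * (1 - β) ^ (d - T.card) * gAbs d x T)]
  refine Finset.sum_congr rfl fun T _ => ?_
  have hT : T.1.Nonempty := Finset.nonempty_iff_ne_empty.mpr (Finset.mem_filter.mp T.2).2
  simp [gAbs, hT]

/-- For the Bernoulli D-norm with `β ∈ (0,1]`: its value at `(1,…,1)` is
`(1-(1-β)^d)/β`; as `β → 0⁺` it converges to the `ℓ¹`-norm; and at `β = 1` it is the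
maximum norm. -/
theorem bernoulliDNorm_props (d : ℕ) (hd : 0 < d) (β : ℝ) (hβ : β ∈ Set.Ioc (0 : ℝ) 1)
    (x : Fin d → ℝ) :
    bernoulliDNorm d β (fun _ => 1) = (1 - (1 - β) ^ d) / β ∧
    Tendsto (fun b : ℝ => bernoulliDNorm d b x) (nhdsWithin 0 (Set.Ioi 0))
      (nhds (∑ i, |x i|)) ∧
    bernoulliDNorm d 1 x =
      Finset.univ.sup' (Finset.univ_nonempty_iff.mpr ⟨⟨0, hd⟩⟩) (fun i => |x i|) := by
  obtain ⟨hβ0, hβ1⟩ := hβ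
  refine ⟨?_, ?_, ?_⟩
  · -- value at (1,…,1)
    rw [bernoulliDNorm_eq_sum]
    have hg : ∀ T ∈ (Finset.univ.powerset.filter (fun T : Finset (Fin d) => T ≠ ∅)),
        gAbs d (fun _ => 1) T = 1 := by
      intro T hT
      have h : T.Nonempty := Finset.nonempty_iff_ne_empty.mpr (Finset.mem_filter.mp hT).2
      simp [gAbs, h]
    rw [Finset.sum_congr rfl (fun T hT => by rw [hg T hT])]
    have key : β * ∑ T ∈ (Finset.univ.powerset.filter
        (fun T : Finset (Fin d) => T ≠ ∅)),
        β ^ (T.card - 1) * (1 - β) ^ (d - T.card) * 1 = 1 - (1 - β) ^ d := by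
      rw [Finset.mul_sum]
      have step : ∀ T ∈ (Finset.univ.powerset.filter
          (fun T : Finset (Fin d) => T ≠ ∅)),
          β * (β ^ (T.card - 1) * (1 - β) ^ (d - T.card) * 1)
            = β ^ T.card * (1 - β) ^ (d - T.card) := by
        intro T hT
        have h : T.Nonempty := Finset.nonempty_iff_ne_empty.mpr (Finset.mem_filter.mp hT).2
        have hc : 1 ≤ T.card := Finset.Nonempty.card_pos h
        rw [mul_one, ← mul_assoc, ← pow_succ']
        congr 2
        omega
      rw [Finset.sum_congr rfl step]
      have hfilter : (Finset.univ.powerset.filter (fun T : Finset (Fin d) => T ≠ ∅))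
          = (Finset.univ.powerset : Finset (Finset (Fin d))).erase ∅ := by
        ext T; simp [Finset.mem_erase, and_comm]
      rw [hfilter]
      have hmem : (∅ : Finset (Fin d)) ∈ (Finset.univ.powerset : Finset (Finset (Fin d))) := by
        simp
      have := Finset.sum_erase_add (Finset.univ.powerset : Finset (Finset (Fin d)))
        (fun T => β ^ T.card * (1 - β) ^ (d - T.card)) hmem
      have htot : ∑ T ∈ (Finset.univ.powerset : Finset (Finset (Fin d))),
          β ^ T.card * (1 - β) ^ (d - T.card) = 1 := by
        rw [Finset.sum_powerset]
        have : ∀ j ∈ Finset.range ((Finset.univ : Finset (Fin d)).card + 1),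
            ∑ T ∈ Finset.powersetCard j (Finset.univ : Finset (Fin d)),
              β ^ T.card * (1 - β) ^ (d - T.card)
            = (β ^ j * (1 - β) ^ (d - j)) * d.choose j := by
          intro j hj
          rw [Finset.sum_congr rfl (fun T hT => by
            rw [(Finset.mem_powersetCard.mp hT).2]), Finset.sum_const,
            Finset.card_powersetCard]
          simp [mul_comm, Finset.card_univ]
        rw [Finset.sum_congr rfl this]
        have hb := add_pow β (1 - β) d
        simp only [add_sub_cancel, one_pow] at hb
        rw [Finset.card_univ, Fintype.card_fin]
        rw [← hb]
      simp only [Finset.card_empty, pow_zero, one_mul, Nat.sub_zero] at this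
      linarith [this, htot]
    field_simp at key ⊢
    linarith [key]
  · -- tendsto as b → 0⁺
    have hcont : Continuous (fun b : ℝ => ∑ T ∈ (Finset.univ.powerset.filter
        (fun T : Finset (Fin d) => T ≠ ∅)),
        b ^ (T.card - 1) * (1 - b) ^ (d - T.card) * gAbs d x T) := by
      apply continuous_finset_sum
      intro T _
      exact (((continuous_id.pow _).mul ((continuous_const.sub continuous_id).pow _)).mul
        continuous_const)
    have hval : ∑ T ∈ (Finset.univ.powerset.filter
        (fun T : Finset (Fin d) => T ≠ ∅)),
        (0:ℝ) ^ (T.card - 1) * (1 - 0) ^ (d - T.card) * gAbs d x T = ∑ i, |x i| := by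
      have step : ∀ T ∈ (Finset.univ.powerset.filter
          (fun T : Finset (Fin d) => T ≠ ∅)),
          (0:ℝ) ^ (T.card - 1) * (1 - 0) ^ (d - T.card) * gAbs d x T
            = if T.card = 1 then gAbs d x T else 0 := by
        intro T hT
        have h : T.Nonempty := Finset.nonempty_iff_ne_empty.mpr (Finset.mem_filter.mp hT).2
        have hc : 1 ≤ T.card := Finset.Nonempty.card_pos h
        by_cases h1 : T.card = 1
        · simp [h1]
        · have : T.card - 1 ≠ 0 := by omega
          simp [zero_pow this, h1]
      rw [Finset.sum_congr rfl step, ← Finset.sum_filter]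
      have hset : ((Finset.univ.powerset.filter (fun T : Finset (Fin d) => T ≠ ∅)).filter
          (fun T => T.card = 1)) = Finset.powersetCard 1 (Finset.univ : Finset (Fin d)) := by
        rw [Finset.powersetCard_eq_filter]
        ext T
        simp only [Finset.mem_filter, Finset.mem_powerset]
        constructor
        · rintro ⟨⟨h1, _⟩, h3⟩; exact ⟨h1, h3⟩
        · rintro ⟨h1, h2⟩
          refine ⟨⟨h1, ?_⟩, h2⟩
          intro he; rw [he] at h2; simp at h2
      rw [hset, Finset.powersetCard_one, Finset.sum_map]
      refine Finset.sum_congr rfl fun i _ => ?_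
      simp [gAbs]
    have := (hcont.tendsto 0).mono_left (nhdsWithin_le_nhds (s := Set.Ioi (0:ℝ)))
    rw [hval] at this
    refine Tendsto.congr (fun b => ?_) this
    rw [bernoulliDNorm_eq_sum]
  · -- value at β = 1
    rw [bernoulliDNorm_eq_sum]
    have step : ∀ T ∈ (Finset.univ.powerset.filter
        (fun T : Finset (Fin d) => T ≠ ∅)),
        (1:ℝ) ^ (T.card - 1) * (1 - 1) ^ (d - T.card) * gAbs d x T
          = if T = Finset.univ then gAbs d x T else 0 := by
      intro T hT
      by_cases h1 : T = Finset.univ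
      · subst h1
        simp [Finset.card_univ]
      · have hsub : T ⊆ Finset.univ := Finset.mem_powerset.mp (Finset.mem_filter.mp hT).1
        have hlt : T.card < d := by
          have := Finset.card_lt_card (Finset.ssubset_univ_iff.mpr h1)
          simpa [Finset.card_univ] using this
        have : d - T.card ≠ 0 := by omega
        simp [zero_pow this, h1]
    rw [Finset.sum_congr rfl step, ← Finset.sum_filter]
    have hset : ((Finset.univ.powerset.filter (fun T : Finset (Fin d) => T ≠ ∅)).filter
        (fun T => T = Finset.univ)) = {Finset.univ} := by
      ext T
      simp only [Finset.mem_filter, Finset.mem_singleton, Finset.mem_powerset]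
      constructor
      · rintro ⟨_, h⟩; exact h
      · rintro rfl
        refine ⟨⟨Finset.Subset.refl _, ?_⟩, rfl⟩
        exact Finset.nonempty_iff_ne_empty.mp (Finset.univ_nonempty_iff.mpr ⟨⟨0, hd⟩⟩)
    rw [hset, Finset.sum_singleton]
    have h : (Finset.univ : Finset (Fin d)).Nonempty := Finset.univ_nonempty_iff.mpr ⟨⟨0, hd⟩⟩
    simp [gAbs, h]
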